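/- For constants α, β, and a continuous function R : [0,∞) → ℝ, define ξ(α,t) = ∫₀ᵗ R(t')·e^{-(α−β)t'}dt'. Then u(n,α,t) = e^{-(α−β)t}·u₀(n·e^{-(α−β)t} − αβ·ξ(α,t), α) satisfies the PDE ∂u/∂t + (αβ·R(t) + (α−β)·n)·∂u/∂n + (α−β)·u = 0 with u(n,α,0) = u₀(n,α). -/

import Mathlib

/-- With `ξ(α,t) = ∫₀ᵗ R(t') e^{-(α−β)t'} dt'`, the formula
`u(n,α,t) = e^{-(α−β)t} u₀(n e^{-(α−β)t} − αβ ξ(α,t), α)` satisfies the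
biased-migration phase-space equation
`∂u/∂t + (αβ R(t) + (α−β)n) ∂u/∂n + (α−β)u = 0` with `u(n,α,0) = u₀(n,α)`. -/
theorem stmt13 (β : ℝ) (R : ℝ → ℝ) (hR : Continuous R)
    (u₀ : ℝ × ℝ → ℝ) (hu₀ : ContDiff ℝ 1 u₀)
    (ξ : ℝ → ℝ → ℝ)
    (hξ : ∀ α t, ξ α t = ∫ t' in (0:ℝ)..t, R t' * Real.exp (-(α - β) * t'))
    (u : ℝ → ℝ → ℝ → ℝ)
    (hu : ∀ n α t, u n α t = Real.exp (-(α - β) * t) *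
      u₀ (n * Real.exp (-(α - β) * t) - α * β * ξ α t, α)) :
    (∀ n α t : ℝ,
      deriv (fun s => u n α s) t +
        (α * β * R t + (α - β) * n) * deriv (fun m => u m α t) n +
        (α - β) * u n α t = 0) ∧
    (∀ n α : ℝ, u n α 0 = u₀ (n, α)) := by
  constructor
  · intro n α t
    set E : ℝ → ℝ := fun s => Real.exp (-(α - β) * s) with hE
    -- derivative of E
    have hEd : HasDerivAt E (-(α - β) * E t) t := by
      simpa [E, mul_comm] using ((hasDerivAt_id t).const_mul (-(α - β))).exp
    -- derivative of ξ α
    have hξd : HasDerivAt (ξ α) (R t * E t) t := by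
      have hfun : ξ α = fun s => ∫ t' in (0:ℝ)..s, R t' * Real.exp (-(α - β) * t') := by
        funext s; exact hξ α s
      rw [hfun]
      exact ((hR.mul (by continuity)).integral_hasStrictDerivAt 0 t).hasDerivAt
    -- f : slice of u₀
    set f : ℝ → ℝ := fun x => u₀ (x, α) with hf
    have hfd : ∀ x, HasDerivAt f (deriv f x) x := by
      intro x
      have : Differentiable ℝ f :=
        (hu₀.differentiable one_ne_zero).comp (differentiable_id.prodMk (differentiable_const α))
      exact (this x).hasDerivAt
    set g : ℝ := n * E t - α * β * ξ α t with hg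
    set d : ℝ := deriv f g with hd
    -- time derivative
    have hinner : HasDerivAt (fun s => n * E s - α * β * ξ α s)
        (n * (-(α - β) * E t) - α * β * (R t * E t)) t :=
      (hEd.const_mul n).sub (hξd.const_mul (α * β))
    have hcomp : HasDerivAt (fun s => f (n * E s - α * β * ξ α s))
        (d * (n * (-(α - β) * E t) - α * β * (R t * E t))) t :=
      by have h := (hfd g).comp t hinner; exact h
    have hT : HasDerivAt (fun s => u n α s)
        (-(α - β) * E t * f g + E t * (d * (n * (-(α - β) * E t) - α * β * (R t * E t)))) t := by
      have : HasDerivAt (fun s => E s * f (n * E s - α * β * ξ α s))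
          (-(α - β) * E t * f g + E t * (d * (n * (-(α - β) * E t) - α * β * (R t * E t)))) t :=
        hEd.mul hcomp
      convert this using 2 with s
      exact hu n α s
    -- space derivative
    have hN : HasDerivAt (fun m => u m α t) (E t * (d * E t)) n := by
      have hinn : HasDerivAt (fun m => m * E t - α * β * ξ α t) (E t) n := by
        simpa using ((hasDerivAt_id n).mul_const (E t)).sub_const (α * β * ξ α t)
      have : HasDerivAt (fun m => E t * f (m * E t - α * β * ξ α t))
          (E t * (d * E t)) n := by have h := (((hfd g).comp n hinn).const_mul (E t)); exact h
      convert this using 2 with m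
      exact hu m α t
    rw [hT.deriv, hN.deriv, hu n α t]
    show _ + _ + (α - β) * (E t * f g) = 0
    ring
  · intro n α
    rw [hu, hξ]
    simp
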